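/- Let G be a finite subgroup of SO(3) and let x be a nonzero vector in ℝ³. Then the stabilizer of x in G, i.e. the subgroup { g ∈ G : g • x = x }, is a cyclic group. -/

import Mathlib

def SO3 : Subgroup (Matrix.orthogonalGroup (Fin 3) ℝ) where
  carrier := {A | ((A : Matrix (Fin 3) (Fin 3) ℝ)).det = 1}
  one_mem' := by simp
  mul_mem' := by
    intro a b ha hb
    simp only [Set.mem_setOf_eq, Matrix.UnitaryGroup.mul_val, Matrix.det_mul] at *
    rw [ha, hb, mul_one]
  inv_mem' := by
    intro a ha
    simp only [Set.mem_setOf_eq, Matrix.UnitaryGroup.inv_val, Matrix.star_eq_conjTranspose,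
      Matrix.det_conjTranspose, star_trivial] at *
    exact ha

noncomputable instance : MulAction (Matrix.orthogonalGroup (Fin 3) ℝ) (EuclideanSpace ℝ (Fin 3)) where
  smul A v := WithLp.toLp 2 (Matrix.mulVec (A : Matrix (Fin 3) (Fin 3) ℝ) v)
  one_smul v := by
    change WithLp.toLp 2 (Matrix.mulVec (1 : Matrix (Fin 3) (Fin 3) ℝ) v) = v
    rw [Matrix.one_mulVec]
  mul_smul A B v := by
    change WithLp.toLp 2 (Matrix.mulVec ((A : Matrix (Fin 3) (Fin 3) ℝ) * (B : Matrix (Fin 3) (Fin 3) ℝ)) v) = _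
    rw [← Matrix.mulVec_mulVec]; rfl

open Matrix in
private lemma dot_mulVec_mulVec' {A : Matrix (Fin 3) (Fin 3) ℝ} (hA : Aᵀ * A = 1)
    (u v : Fin 3 → ℝ) : (A *ᵥ u) ⬝ᵥ (A *ᵥ v) = u ⬝ᵥ v := by
  have h1 : A *ᵥ u = u ᵥ* Aᵀ := by rw [← mulVec_transpose, transpose_transpose]
  rw [dotProduct_mulVec, h1, vecMul_vecMul, hA, vecMul_one]

/-- The stabilizer of a nonzero vector `x ∈ ℝ³` in a finite subgroup `G` of `SO(3)`
is a cyclic group. -/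
theorem stabilizer_finite_subgroup_SO3_isCyclic
    (G : Subgroup SO3) [Finite G] (x : EuclideanSpace ℝ (Fin 3)) (hx : x ≠ 0) :
    IsCyclic (MulAction.stabilizer G x) := by
  classical
  open Matrix in
  have hxnorm : ‖x‖ ≠ 0 := norm_ne_zero_iff.mpr hx
  have hfr : Module.finrank ℝ (EuclideanSpace ℝ (Fin 3)) = Fintype.card (Fin 3) := by simp
  have horth : Orthonormal ℝ (({0} : Set (Fin 3)).restrict fun _ => (‖x‖⁻¹ : ℝ) • x) := by
    constructor
    · intro i
      show ‖(‖x‖⁻¹ : ℝ) • x‖ = 1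
      simp [Set.restrict_apply, norm_smul, inv_mul_cancel₀ hxnorm]
    · intro i j hij
      exact absurd (Subtype.ext (i.2.trans j.2.symm)) hij
  obtain ⟨b, hb⟩ := Orthonormal.exists_orthonormalBasis_extension_of_card_eq hfr horth
  have hb0 : b 0 = (‖x‖⁻¹ : ℝ) • x := hb 0 rfl
  -- dot products of basis vectors
  have hbij : ∀ i j, (b i : Fin 3 → ℝ) ⬝ᵥ (b j) = if i = j then 1 else 0 := by
    intro i j
    have := orthonormal_iff_ite.mp b.orthonormal i j
    simpa [PiLp.inner_apply, dotProduct, RCLike.inner_apply, mul_comm] using this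
  set Q : Matrix (Fin 3) (Fin 3) ℝ := Matrix.of fun i j => b j i with hQdef
  have hQtQ : Qᵀ * Q = 1 := by
    ext i j
    have := hbij i j
    simpa [Matrix.mul_apply, dotProduct, hQdef, Matrix.one_apply] using this
  have hQQt : Q * Qᵀ = 1 := mul_eq_one_comm.mp hQtQ
  set A : MulAction.stabilizer G x → Matrix (Fin 3) (Fin 3) ℝ :=
    fun g => ((((g : G) : SO3) : Matrix.orthogonalGroup (Fin 3) ℝ) : Matrix (Fin 3) (Fin 3) ℝ)
    with hAdef
  have hA_mul : ∀ g h, A (g * h) = A g * A h := fun g h => rfl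
  have hA_one : A 1 = 1 := rfl
  have hA_orth : ∀ g, (A g)ᵀ * A g = 1 := by
    intro g
    have hmem := (((g : G) : SO3) : Matrix.orthogonalGroup (Fin 3) ℝ).2
    have := (Unitary.mem_iff.mp hmem).1
    simpa [Matrix.star_eq_conjTranspose, Matrix.conjTranspose_eq_transpose_of_trivial] using this
  have hA_det : ∀ g, (A g).det = 1 := fun g => ((g : G) : SO3).2
  have hA_x : ∀ g, A g *ᵥ x = x := fun g => congrArg WithLp.ofLp g.2
  have hA_b0 : ∀ g, A g *ᵥ (b 0 : Fin 3 → ℝ) = b 0 := by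
    intro g
    rw [hb0]
    show A g *ᵥ ((‖x‖⁻¹ : ℝ) • (x : Fin 3 → ℝ)) = _
    rw [Matrix.mulVec_smul, hA_x]
    rfl
  set M : MulAction.stabilizer G x → Matrix (Fin 3) (Fin 3) ℝ :=
    fun g => Qᵀ * (A g * Q) with hMdef
  have hMent : ∀ g i j, M g i j = (b i : Fin 3 → ℝ) ⬝ᵥ (A g *ᵥ (b j)) := by
    intro g i j
    simp only [hMdef, Matrix.mul_apply, Matrix.mulVec, dotProduct, Matrix.transpose_apply,
      hQdef, Matrix.of_apply, Finset.mul_sum]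
  have hM_col0 : ∀ g i, M g i 0 = if i = 0 then 1 else 0 := by
    intro g i
    rw [hMent, hA_b0, hbij]
  have hM_row0 : ∀ g j, M g 0 j = if j = 0 then 1 else 0 := by
    intro g j
    rw [hMent, ← hA_b0 g, dot_mulVec_mulVec' (hA_orth g), hbij]
    simp [eq_comm]
  have hM_orth : ∀ g, (M g)ᵀ * M g = 1 := by
    intro g
    calc (Qᵀ * (A g * Q))ᵀ * (Qᵀ * (A g * Q))
        = Qᵀ * ((A g)ᵀ * ((Q * Qᵀ) * (A g * Q))) := by
          simp only [Matrix.transpose_mul, Matrix.transpose_transpose, Matrix.mul_assoc]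
      _ = Qᵀ * ((A g)ᵀ * (A g * Q)) := by rw [hQQt, Matrix.one_mul]
      _ = Qᵀ * (((A g)ᵀ * A g) * Q) := by rw [Matrix.mul_assoc]
      _ = 1 := by rw [hA_orth g, Matrix.one_mul, hQtQ]
  have hM_det : ∀ g, (M g).det = 1 := by
    intro g
    have h2 : Qᵀ.det * Q.det = 1 := by
      have := congrArg Matrix.det hQtQ
      simpa [Matrix.det_mul] using this
    rw [hMdef]
    simp only [Matrix.det_mul, hA_det, one_mul, mul_one]
    linear_combination h2
  -- scalar relations
  have hM_rel : ∀ g, M g 1 2 = -(M g 2 1) ∧ M g 2 2 = M g 1 1 := by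
    intro g
    have h11 : ((M g)ᵀ * M g) 1 1 = (1 : Matrix (Fin 3) (Fin 3) ℝ) 1 1 := by rw [hM_orth]
    have h12 : ((M g)ᵀ * M g) 1 2 = (1 : Matrix (Fin 3) (Fin 3) ℝ) 1 2 := by rw [hM_orth]
    have hdet := hM_det g
    rw [Matrix.det_fin_three] at hdet
    simp only [Matrix.mul_apply, Fin.sum_univ_three, Matrix.transpose_apply,
      Matrix.one_apply_eq, Matrix.one_apply_ne (by decide : (1 : Fin 3) ≠ 2)] at h11 h12
    have e20 : ((2:Fin 3) = 0) ↔ False := by decide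
    have e10 : ((1:Fin 3) = 0) ↔ False := by decide
    simp only [hM_row0, hM_col0, e20, e10, if_false, if_true, eq_self_iff_true,
      mul_zero, zero_mul, mul_one, one_mul, add_zero, zero_add, sub_zero] at h11 h12 hdet
    constructor
    · linear_combination -(M g 2 1)*hdet + M g 1 1*h12 - M g 1 2*h11
    · linear_combination M g 1 1*hdet + M g 2 1*h12 - M g 2 2*h11
  have h01 : ∀ g, M g 0 1 = 0 := fun g => by rw [hM_row0, if_neg (by decide)]
  have h02 : ∀ g, M g 0 2 = 0 := fun g => by rw [hM_row0, if_neg (by decide)]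
  have h10 : ∀ g, M g 1 0 = 0 := fun g => by rw [hM_col0, if_neg (by decide)]
  have h20 : ∀ g, M g 2 0 = 0 := fun g => by rw [hM_col0, if_neg (by decide)]
  have h00 : ∀ g, M g 0 0 = 1 := fun g => by rw [hM_col0, if_pos rfl]
  have hM_mul : ∀ g h, M (g * h) = M g * M h := by
    intro g h
    show Qᵀ * (A (g * h) * Q) = Qᵀ * (A g * Q) * (Qᵀ * (A h * Q))
    rw [hA_mul]
    calc Qᵀ * (A g * A h * Q)
        = Qᵀ * (A g * (1 * (A h * Q))) := by rw [Matrix.one_mul, Matrix.mul_assoc]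
      _ = Qᵀ * (A g * ((Q * Qᵀ) * (A h * Q))) := by rw [hQQt]
      _ = (Qᵀ * (A g * Q)) * (Qᵀ * (A h * Q)) := by simp only [Matrix.mul_assoc]
  let φ : MulAction.stabilizer G x →* ℂ :=
  { toFun := fun g => ⟨M g 1 1, M g 2 1⟩
    map_one' := by
      have hM1 : M 1 = 1 := by
        show Qᵀ * (A 1 * Q) = 1
        rw [hA_one, Matrix.one_mul, hQtQ]
      refine Complex.ext ?_ ?_ <;> simp [hM1, Matrix.one_apply, Complex.one_re, Complex.one_im]
    map_mul' := by
      intro g h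
      have key := hM_mul g h
      refine Complex.ext ?_ ?_ <;>
        simp only [key, Matrix.mul_apply, Fin.sum_univ_three, h01 h, (hM_rel g).1,
          (hM_rel g).2, Complex.mul_re, Complex.mul_im] <;>
        ring }
  have hinj : Function.Injective φ := by
    rw [injective_iff_map_eq_one]
    intro g hg
    have h11 : M g 1 1 = 1 := by
      have := congrArg Complex.re hg
      simpa [φ] using this
    have h21 : M g 2 1 = 0 := by
      have := congrArg Complex.im hg
      simpa [φ] using this
    have hMg : Qᵀ * (A g * Q) = 1 := by
      show M g = 1
      ext i j
      fin_cases i <;> fin_cases j <;>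
        simp [Matrix.one_apply, h00 g, h01 g, h02 g, h10 g, h20 g, h11, h21,
          (hM_rel g).1, (hM_rel g).2]
    have hAg : A g = 1 := by
      calc A g = (Q * Qᵀ) * A g * (Q * Qᵀ) := by rw [hQQt, Matrix.one_mul, Matrix.mul_one]
        _ = Q * (Qᵀ * (A g * Q)) * Qᵀ := by simp only [Matrix.mul_assoc]
        _ = 1 := by rw [hMg, Matrix.mul_one, hQQt]
    exact Subtype.ext (Subtype.ext (Subtype.ext (Subtype.ext hAg)))
  exact isCyclic_of_subgroup_isDomain φ hinj
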